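/- Let G = T × D be a finite abelian pseudo-reflection group with T the transvection subgroup acting with different θ_T and D the homology subgroup with different θ_D. Then θ_T ∈ k[V^D] (a polynomial in coordinates of V^D), θ_D ∈ k[V_D], and θ_G = θ_T·θ_D; in particular θ_T is D-invariant and θ_D is T-invariant. -/

import Mathlib

open MvPolynomial

set_option synthInstance.maxHeartbeats 1000000
set_option maxHeartbeats 1000000

variable {k : Type*} [Field k] {ι : Type*} [Fintype ι] [DecidableEq ι]

noncomputable def galAct (M : Matrix.GeneralLinearGroup ι k) :
    MvPolynomial ι k →ₐ[k] MvPolynomial ι k :=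
  aeval fun i => ∑ j, (((M⁻¹ : Matrix.GeneralLinearGroup ι k) : Matrix ι ι k) i j) • X j

def invariants (G : Subgroup (Matrix.GeneralLinearGroup ι k)) :
    Subalgebra k (MvPolynomial ι k) where
  carrier := {p | ∀ σ ∈ G, galAct σ p = p}
  mul_mem' := fun ha hb σ hσ => by rw [map_mul, ha σ hσ, hb σ hσ]
  add_mem' := fun ha hb σ hσ => by rw [map_add, ha σ hσ, hb σ hσ]
  algebraMap_mem' := fun r σ hσ => by simp [galAct]

noncomputable def fixedSpace (M : Matrix.GeneralLinearGroup ι k) : Submodule k (ι → k) :=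
  LinearMap.ker (Matrix.mulVecLin ((M : Matrix ι ι k) - 1))

noncomputable def moveSpace (M : Matrix.GeneralLinearGroup ι k) : Submodule k (ι → k) :=
  LinearMap.range (Matrix.mulVecLin ((M : Matrix ι ι k) - 1))

def IsPseudoReflection (M : Matrix.GeneralLinearGroup ι k) : Prop :=
  Module.finrank k (moveSpace M) = 1

def IsTransvection (M : Matrix.GeneralLinearGroup ι k) : Prop :=
  IsPseudoReflection M ∧ moveSpace M ≤ fixedSpace M

noncomputable def linForm (y : Module.Dual k (ι → k)) : MvPolynomial ι k :=
  ∑ i, C (y (Pi.single i 1)) * X i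

noncomputable def hilbertIdeal (G : Subgroup (Matrix.GeneralLinearGroup ι k)) :
    Ideal (MvPolynomial ι k) :=
  Ideal.span {p | p ∈ invariants G ∧ ∃ d, 0 < d ∧ p.IsHomogeneous d}

def DSP (G : Subgroup (Matrix.GeneralLinearGroup ι k)) : Prop :=
  ∃ π : MvPolynomial ι k →ₗ[↥(invariants G)] ↥(invariants G),
    Function.Surjective π ∧
    ∀ (p : MvPolynomial ι k) (d : ℕ), p.IsHomogeneous d →
      ((π p : MvPolynomial ι k)).IsHomogeneous d

noncomputable def fixedSubmodule (G : Subgroup (Matrix.GeneralLinearGroup ι k)) :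
    Submodule k (ι → k) := ⨅ σ ∈ G, fixedSpace σ

/-- The block-diagonal embedding `GL(V^D) × GL(V_D) → GL(V^D ⊕ V_D)`. -/
noncomputable def blockHom {k : Type*} [Field k] {α β : Type*} [Fintype α] [DecidableEq α]
    [Fintype β] [DecidableEq β] :
    Matrix.GeneralLinearGroup α k × Matrix.GeneralLinearGroup β k →*
      Matrix.GeneralLinearGroup (α ⊕ β) k where
  toFun p :=
    ⟨Matrix.fromBlocks (p.1 : Matrix α α k) 0 0 (p.2 : Matrix β β k),
     Matrix.fromBlocks ((p.1⁻¹ : Matrix.GeneralLinearGroup α k) : Matrix α α k) 0 0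
       ((p.2⁻¹ : Matrix.GeneralLinearGroup β k) : Matrix β β k),
     by
      rw [Matrix.fromBlocks_multiply]
      simp only [Matrix.mul_zero, Matrix.zero_mul, add_zero, zero_add]
      rw [← Units.val_mul, ← Units.val_mul, mul_inv_cancel, mul_inv_cancel]
      simp [← Matrix.fromBlocks_one],
     by
      rw [Matrix.fromBlocks_multiply]
      simp only [Matrix.mul_zero, Matrix.zero_mul, add_zero, zero_add]
      rw [← Units.val_mul, ← Units.val_mul, inv_mul_cancel, inv_mul_cancel]
      simp [← Matrix.fromBlocks_one]⟩
  map_one' := by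
    ext : 1
    simp [← Matrix.fromBlocks_one]
  map_mul' p q := by
    ext : 1
    show Matrix.fromBlocks _ _ _ _ = Matrix.fromBlocks _ _ _ _ * Matrix.fromBlocks _ _ _ _
    rw [Matrix.fromBlocks_multiply]
    simp

/-- A homology: a pseudo-reflection that is not a transvection (it is then diagonalizable). -/
def IsHomology {k : Type*} [Field k] {ι : Type*} [Fintype ι] [DecidableEq ι]
    (M : Matrix.GeneralLinearGroup ι k) : Prop :=
  IsPseudoReflection M ∧ ¬ moveSpace M ≤ fixedSpace M

open scoped Classical in
/-- The product, over the elements of `G` satisfying the predicate `P` (e.g. over the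
pseudo-reflections of `G`), of the chosen linear forms `x σ` defining their fixed
hyperplanes: the "different" of the action when `P` selects the pseudo-reflections. -/
noncomputable def theta {k : Type*} [Field k] {ι : Type*} [Fintype ι] [DecidableEq ι]
    (G : Subgroup (Matrix.GeneralLinearGroup ι k)) [Fintype ↥G]
    (x : ↥G → Module.Dual k (ι → k))
    (P : Matrix.GeneralLinearGroup ι k → Prop) : MvPolynomial ι k :=
  ∏ σ : ↥G, if P (σ : Matrix.GeneralLinearGroup ι k) then linForm (x σ) else 1

section Helpers
open scoped Matrix

variable {k : Type*} [Field k]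

theorem aux_pow_one_add {A : Type*} [Ring A] [Module k A] [SMulCommClass k A A]
    [IsScalarTower k A A]
    (N : A) (c : k) (h : N * N = c • N) (n : ℕ) :
    (1 + N) ^ n = 1 + (∑ i ∈ Finset.range n, (1+c)^i) • N := by
  induction n with
  | zero => simp
  | succ n ih =>
      rw [pow_succ, ih, geom_sum_succ]
      rw [add_mul, mul_add, mul_add, one_mul, mul_one, smul_mul_assoc, h, smul_smul]
      have key : (∑ i ∈ Finset.range n, (1+c)^i) • N + ((∑ i ∈ Finset.range n, (1+c)^i) * c) • N
          = ((1 + c) * ∑ i ∈ Finset.range n, (1+c)^i) • N := by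
        rw [← add_smul]; congr 1; ring
      rw [add_assoc, key, add_smul, one_smul, one_mul]
      abel

theorem aux_char_root (μ : k) : ∀ n : ℕ, 0 < n → μ ^ n = 1 →
    ∃ m : ℕ, 0 < m ∧ μ ^ m = 1 ∧ (m : k) ≠ 0 := by
  intro n
  induction n using Nat.strong_induction_on with
  | _ n IH =>
    intro hn hμ
    by_cases hc : (n : k) ≠ 0
    · exact ⟨n, hn, hμ, hc⟩
    push_neg at hc
    have hchar : ringChar k ∣ n := (ringChar.spec k n).mp hc
    have hp : (ringChar k).Prime := by
      rcases CharP.char_is_prime_or_zero k (ringChar k) with h | h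
      · exact h
      · exfalso; rw [h] at hchar; simp at hchar; omega
    haveI := Fact.mk hp
    obtain ⟨m, rfl⟩ := hchar
    have hm : 0 < m := by
      rcases Nat.eq_zero_or_pos m with h | h
      · simp [h] at hn
      · exact h
    have hP : CharP k (ringChar k) := ringChar.charP k
    haveI : ExpChar k (ringChar k) := ExpChar.prime hp
    have hfr : (μ ^ m) ^ ringChar k = 1 := by rw [← pow_mul, mul_comm]; exact hμ
    have hthis : μ ^ m = 1 := by
      have h1 : (μ ^ m - 1) ^ ringChar k = 0 := by
        rw [sub_pow_char, hfr, one_pow, sub_self]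
      have h2 : μ ^ m - 1 = 0 := pow_eq_zero_iff hp.ne_zero |>.mp h1
      exact sub_eq_zero.mp h2
    have hlt : m < ringChar k * m := by nlinarith [hp.one_lt]
    exact IH m hlt hm hthis

variable {ι : Type*} [Fintype ι] [DecidableEq ι]

theorem aux_mat_eq_zero {M : Matrix ι ι k} (h : ∀ v, M *ᵥ v = 0) : M = 0 := by
  ext i j
  have := congrFun (h (Pi.single j 1)) i
  simpa [Matrix.mulVec_single] using this

theorem aux_move_le_fixed_iff (M : Matrix.GeneralLinearGroup ι k) :
    moveSpace M ≤ fixedSpace M ↔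
      ((M : Matrix ι ι k) - 1) * ((M : Matrix ι ι k) - 1) = 0 := by
  rw [moveSpace, fixedSpace, LinearMap.range_le_ker_iff]
  constructor
  · intro h
    apply aux_mat_eq_zero
    intro v
    have := congrFun (congrArg DFunLike.coe h) v
    rw [← Matrix.mulVec_mulVec]
    simpa [Matrix.mulVecLin_mul, Matrix.mulVecLin_apply, Matrix.sub_mulVec] using this
  · intro h
    rw [← Matrix.mulVecLin_mul, h, Matrix.mulVecLin_zero]

/-- The unipotent with order invertible in `k` is trivial. -/
theorem aux_unip_eq_one (M : Matrix.GeneralLinearGroup ι k)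
    (hsq : ((M : Matrix ι ι k) - 1) * ((M : Matrix ι ι k) - 1) = 0)
    (n : ℕ) (hn : 0 < n) (hpow : M ^ n = 1) (hnk : (n : k) ≠ 0) : M = 1 := by
  set N : Matrix ι ι k := (M : Matrix ι ι k) - 1 with hN
  have hsq' : N * N = (0 : k) • N := by rw [zero_smul]; exact hsq
  have hMn : ((M : Matrix ι ι k)) ^ n = 1 := by
    have := congrArg (Units.val) hpow
    simpa using this
  have hMN : (M : Matrix ι ι k) = 1 + N := by rw [hN]; abel
  rw [hMN, aux_pow_one_add (k := k) N (0:k) hsq' n] at hMn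
  simp only [add_zero, one_pow, Finset.sum_const, Finset.card_range, nsmul_eq_mul, mul_one] at hMn
  have hzero : ((n : k)) • N = 0 := by
    have := hMn
    rwa [add_eq_left] at this
  have : N = 0 := by
    rcases smul_eq_zero.mp hzero with h | h
    · exact absurd h hnk
    · exact h
  ext i j
  have := congrFun (congrFun this i) j
  simpa [hN, Matrix.one_apply] using sub_eq_zero.mp (by simpa [hN, Matrix.sub_apply, Matrix.one_apply] using this)

end Helpers

section Helpers2
open scoped Matrix
variable {k : Type*} [Field k] {ι : Type*} [Fintype ι] [DecidableEq ι]

/-- Structure of a homology: `(M-1)² = c•(M-1)` with `c ≠ 0`, and `M - 1 ≠ 0`. -/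
theorem aux_homology_struct (M : Matrix.GeneralLinearGroup ι k) (hM : IsHomology M) :
    ∃ c : k, c ≠ 0 ∧
      ((M : Matrix ι ι k) - 1) * ((M : Matrix ι ι k) - 1) = c • ((M : Matrix ι ι k) - 1) ∧
      ((M : Matrix ι ι k) - 1) ≠ 0 := by
  set N : Matrix ι ι k := (M : Matrix ι ι k) - 1 with hN
  obtain ⟨hpr, hnle⟩ := hM
  have hrank : Module.finrank k (moveSpace M) = 1 := hpr
  obtain ⟨v₀, hv₀, hspan⟩ := finrank_eq_one_iff'.mp hrank
  set v : ι → k := (v₀ : ι → k) with hv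
  have hvne : v ≠ 0 := fun h => hv₀ (Subtype.ext h)
  have hNv_mem : N *ᵥ v ∈ moveSpace M := ⟨v, rfl⟩
  obtain ⟨c, hc⟩ := hspan ⟨N *ᵥ v, hNv_mem⟩
  have hcv : N *ᵥ v = c • v := by
    have := congrArg (Subtype.val) hc
    simpa using this.symm
  have hmul : ∀ x : ι → k, ∃ a : k, N *ᵥ x = a • v := by
    intro x
    obtain ⟨a, ha⟩ := hspan ⟨N *ᵥ x, ⟨x, rfl⟩⟩
    exact ⟨a, by simpa using (congrArg Subtype.val ha).symm⟩
  have hsq : N * N = c • N := by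
    have h0 : ∀ x, (N * N - c • N) *ᵥ x = 0 := by
      intro x
      obtain ⟨a, ha⟩ := hmul x
      rw [Matrix.sub_mulVec, ← Matrix.mulVec_mulVec, ha, Matrix.mulVec_smul, hcv,
        Matrix.smul_mulVec, ha, smul_comm a c v, sub_self]
    exact sub_eq_zero.mp (aux_mat_eq_zero h0)
  have hcne : c ≠ 0 := by
    intro hc0
    apply hnle
    rintro w ⟨x, rfl⟩
    show Matrix.mulVecLin N _ = 0
    simp only [Matrix.mulVecLin_apply, Matrix.mulVec_mulVec, ← hN, hsq, hc0, zero_smul,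
      Matrix.zero_mulVec]
  have hNne : N ≠ 0 := by
    intro h0
    rw [moveSpace, ← hN, h0, Matrix.mulVecLin_zero, LinearMap.range_zero] at hrank
    simp at hrank
  exact ⟨c, hcne, hsq, hNne⟩

/-- A homology of finite order has order invertible in `k`. -/
theorem aux_homology_order (M : Matrix.GeneralLinearGroup ι k) (hM : IsHomology M)
    (n₀ : ℕ) (hn₀ : 0 < n₀) (hpow : M ^ n₀ = 1) :
    ∃ n : ℕ, 0 < n ∧ M ^ n = 1 ∧ (n : k) ≠ 0 := by
  obtain ⟨c, hc, hsq, hNne⟩ := aux_homology_struct M hM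
  set N : Matrix ι ι k := (M : Matrix ι ι k) - 1 with hN
  have hMN : (M : Matrix ι ι k) = 1 + N := by rw [hN]; abel
  have hsq' : N * N = c • N := hsq
  have hmat : ∀ j : ℕ, ((M : Matrix ι ι k)) ^ j
      = 1 + (∑ i ∈ Finset.range j, (1+c)^i) • N := by
    intro j; rw [hMN, aux_pow_one_add (k := k) N c hsq' j]
  have hs : ∀ j : ℕ, (∑ i ∈ Finset.range j, (1+c)^i) * c = (1+c)^j - 1 := by
    intro j
    have := geom_sum_mul (1 + c) j
    simpa using this
  have hsum0 : ∀ j : ℕ, (M : Matrix ι ι k) ^ j = 1 → (1+c)^j = 1 := by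
    intro j hj
    rw [hmat j] at hj
    have h1 : (∑ i ∈ Finset.range j, (1+c)^i) • N = 0 := by
      rwa [add_eq_left] at hj
    rcases smul_eq_zero.mp h1 with h | h
    · have := hs j
      rw [h, zero_mul] at this
      exact sub_eq_zero.mp this.symm
    · exact absurd h hNne
  have hM1 : ((M : Matrix ι ι k)) ^ n₀ = 1 := by
    have := congrArg (Units.val) hpow
    simpa using this
  have hlam : (1+c) ^ n₀ = 1 := hsum0 n₀ hM1
  obtain ⟨n, hn, hlamn, hnk⟩ := aux_char_root (1+c) n₀ hn₀ hlam
  refine ⟨n, hn, ?_, hnk⟩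
  have hsn : (∑ i ∈ Finset.range n, (1+c)^i) = 0 := by
    have := hs n
    rw [hlamn, sub_self] at this
    exact (mul_eq_zero.mp this).resolve_right hc
  ext : 1
  show ((M : Matrix ι ι k)) ^ n = 1
  rw [hmat n, hsn, zero_smul, add_zero]

end Helpers2

section Helpers3
open scoped Matrix
variable {k : Type*} [Field k] {ι : Type*} [Fintype ι] [DecidableEq ι]

/-- Every element of a commuting group generated by transvections is unipotent. -/
theorem aux_T_unip (T : Subgroup (Matrix.GeneralLinearGroup ι k))
    (hTab : ∀ a ∈ T, ∀ b ∈ T, a * b = b * a)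
    (hTgen : Subgroup.closure {τ | τ ∈ T ∧ IsTransvection τ} = T) :
    ∀ t ∈ T, IsNilpotent ((t : Matrix ι ι k) - 1) := by
  intro t ht
  rw [← hTgen] at ht
  have main : t ∈ T ∧ IsNilpotent ((t : Matrix ι ι k) - 1) := by
    refine Subgroup.closure_induction
      (p := fun g _ => g ∈ T ∧ IsNilpotent ((g : Matrix ι ι k) - 1)) ?_ ?_ ?_ ?_ ht
    · rintro τ ⟨hτT, hτpr, hτle⟩
      refine ⟨hτT, 2, ?_⟩
      rw [pow_two]
      exact (aux_move_le_fixed_iff τ).mp hτle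
    · exact ⟨one_mem T, 1, by simp⟩
    · rintro a b _ _ ⟨haT, haN⟩ ⟨hbT, hbN⟩
      refine ⟨mul_mem haT hbT, ?_⟩
      have hab : Commute ((a : Matrix ι ι k)) ((b : Matrix ι ι k)) := by
        unfold Commute SemiconjBy
        have := congrArg Units.val (hTab a haT b hbT)
        simpa [Units.val_mul] using this
      set A : Matrix ι ι k := (a : Matrix ι ι k) - 1 with hA
      set B : Matrix ι ι k := (b : Matrix ι ι k) - 1 with hB
      have hAB : Commute A B :=
        ((hab.sub_left (Commute.one_left _)).sub_right (Commute.one_right _))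
      have hval : ((a * b : Matrix.GeneralLinearGroup ι k) : Matrix ι ι k) - 1
          = A * B + A + B := by
        rw [Units.val_mul, hA, hB]; noncomm_ring
      rw [hval]
      have n1 : IsNilpotent (A * B) := hAB.isNilpotent_mul_right haN
      have n2 : IsNilpotent (A * B + A) :=
        (Commute.mul_left (Commute.refl A) hAB.symm).isNilpotent_add n1 haN
      exact (Commute.add_left (Commute.mul_left hAB (Commute.refl B)) hAB).isNilpotent_add n2 hbN
    · rintro a _ ⟨haT, haN⟩
      refine ⟨inv_mem haT, ?_⟩
      have hinv : ((a⁻¹ : Matrix.GeneralLinearGroup ι k) : Matrix ι ι k)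
          * ((a : Matrix ι ι k)) = 1 := by
        rw [← Units.val_mul, inv_mul_cancel, Units.val_one]
      have hcomm : Commute ((a⁻¹ : Matrix.GeneralLinearGroup ι k) : Matrix ι ι k)
          ((a : Matrix ι ι k) - 1) := by
        have h2 : ((a : Matrix ι ι k)) * ((a⁻¹ : Matrix.GeneralLinearGroup ι k) : Matrix ι ι k)
            = 1 := by rw [← Units.val_mul, mul_inv_cancel, Units.val_one]
        have : Commute ((a⁻¹ : Matrix.GeneralLinearGroup ι k) : Matrix ι ι k)
            ((a : Matrix ι ι k)) := by
          unfold Commute SemiconjBy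
          rw [hinv, h2]
        exact this.sub_right (Commute.one_right _)
      have hval : ((a⁻¹ : Matrix.GeneralLinearGroup ι k) : Matrix ι ι k) - 1
          = -(((a⁻¹ : Matrix.GeneralLinearGroup ι k) : Matrix ι ι k)
              * ((a : Matrix ι ι k) - 1)) := by
        rw [mul_sub, hinv, mul_one, neg_sub]
      rw [hval]
      exact (hcomm.isNilpotent_mul_left haN).neg
  exact main.2

/-- Every element of a finite commuting group generated by homologies has order
invertible in `k`. -/
theorem aux_D_order (D : Subgroup (Matrix.GeneralLinearGroup ι k)) [Finite ↥D]
    (hDab : ∀ a ∈ D, ∀ b ∈ D, a * b = b * a)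
    (hDgen : Subgroup.closure {σ | σ ∈ D ∧ IsHomology σ} = D) :
    ∀ d ∈ D, ∃ n : ℕ, 0 < n ∧ d ^ n = 1 ∧ (n : k) ≠ 0 := by
  intro d hd
  rw [← hDgen] at hd
  have main : d ∈ D ∧ ∃ n : ℕ, 0 < n ∧ d ^ n = 1 ∧ (n : k) ≠ 0 := by
    refine Subgroup.closure_induction
      (p := fun g _ => g ∈ D ∧ ∃ n : ℕ, 0 < n ∧ g ^ n = 1 ∧ (n : k) ≠ 0) ?_ ?_ ?_ ?_ hd
    · rintro h ⟨hhD, hhom⟩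
      refine ⟨hhD, ?_⟩
      have hfin : IsOfFinOrder (⟨h, hhD⟩ : ↥D) := isOfFinOrder_of_finite _
      obtain ⟨n₀, hn₀, hpow⟩ := hfin.exists_pow_eq_one
      have hpow' : h ^ n₀ = 1 := by
        have := congrArg (Subtype.val) hpow
        simpa using this
      exact aux_homology_order h hhom n₀ hn₀ hpow'
    · exact ⟨one_mem D, 1, one_pos, one_pow 1, by norm_num⟩
    · rintro a b _ _ ⟨haD, n, hn, han, hnk⟩ ⟨hbD, m, hm, hbm, hmk⟩
      refine ⟨mul_mem haD hbD, n * m, Nat.mul_pos hn hm, ?_, by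
        push_cast; exact mul_ne_zero hnk hmk⟩
      have hab : Commute a b := hDab a haD b hbD
      rw [hab.mul_pow, pow_mul, han, one_pow, one_mul, mul_comm n m, pow_mul, hbm, one_pow]
    · rintro a _ ⟨haD, n, hn, han, hnk⟩
      exact ⟨inv_mem haD, n, hn, by rw [inv_pow, han, inv_one], hnk⟩
  exact main.2

end Helpers3

section Helpers4
open scoped Matrix
variable {k : Type*} [Field k] {α β : Type*} [Fintype α] [DecidableEq α]
  [Fintype β] [DecidableEq β]

theorem aux_blockHom_val (t : Matrix.GeneralLinearGroup α k) (d : Matrix.GeneralLinearGroup β k) :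
    ((blockHom (t, d) : Matrix.GeneralLinearGroup (α ⊕ β) k) : Matrix (α ⊕ β) (α ⊕ β) k)
      = Matrix.fromBlocks (t : Matrix α α k) 0 0 (d : Matrix β β k) := rfl

theorem aux_block_sub_one (t : Matrix.GeneralLinearGroup α k)
    (d : Matrix.GeneralLinearGroup β k) :
    ((blockHom (t, d) : Matrix.GeneralLinearGroup (α ⊕ β) k) : Matrix (α ⊕ β) (α ⊕ β) k) - 1
      = Matrix.fromBlocks ((t : Matrix α α k) - 1) 0 0 ((d : Matrix β β k) - 1) := by
  rw [aux_blockHom_val, ← Matrix.fromBlocks_one]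
  ext (i | i) (j | j) <;> simp [Matrix.fromBlocks]

theorem aux_block_mulVec (A : Matrix α α k) (D : Matrix β β k) (x : α → k) (y : β → k) :
    (Matrix.fromBlocks A 0 0 D) *ᵥ (Sum.elim x y) = Sum.elim (A *ᵥ x) (D *ᵥ y) := by
  rw [Matrix.fromBlocks_mulVec]
  simp [Sum.elim_comp_inl, Sum.elim_comp_inr]

theorem aux_block_sq_zero {t : Matrix.GeneralLinearGroup α k}
    {d : Matrix.GeneralLinearGroup β k}
    (h : moveSpace (blockHom (t, d)) ≤ fixedSpace (blockHom (t, d))) :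
    ((t : Matrix α α k) - 1) * ((t : Matrix α α k) - 1) = 0 ∧
    ((d : Matrix β β k) - 1) * ((d : Matrix β β k) - 1) = 0 := by
  have h2 := (aux_move_le_fixed_iff (blockHom (t, d))).mp h
  rw [aux_block_sub_one, Matrix.fromBlocks_multiply] at h2
  simp only [Matrix.mul_zero, Matrix.zero_mul, add_zero, zero_add] at h2
  constructor
  · have := congrArg Matrix.toBlocks₁₁ h2
    simpa [Matrix.toBlocks_fromBlocks₁₁, Matrix.toBlocks₁₁, ← Matrix.ext_iff, funext_iff] using this
  · have := congrArg Matrix.toBlocks₂₂ h2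
    simpa [Matrix.toBlocks_fromBlocks₂₂, Matrix.toBlocks₂₂, ← Matrix.ext_iff, funext_iff] using this

theorem aux_block_sq_zero_rev {t : Matrix.GeneralLinearGroup α k}
    {d : Matrix.GeneralLinearGroup β k}
    (ht : ((t : Matrix α α k) - 1) * ((t : Matrix α α k) - 1) = 0)
    (hd : ((d : Matrix β β k) - 1) * ((d : Matrix β β k) - 1) = 0) :
    moveSpace (blockHom (t, d)) ≤ fixedSpace (blockHom (t, d)) := by
  apply (aux_move_le_fixed_iff (blockHom (t, d))).mpr
  rw [aux_block_sub_one, Matrix.fromBlocks_multiply]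
  simp only [Matrix.mul_zero, Matrix.zero_mul, add_zero, zero_add, ht, hd]
  simp [← Matrix.fromBlocks_one]

/-- A "transvection-like" block element has trivial second block if the second block
has order invertible in `k`. -/
theorem aux_trans_d_eq_one {t : Matrix.GeneralLinearGroup α k}
    {d : Matrix.GeneralLinearGroup β k}
    (h : moveSpace (blockHom (t, d)) ≤ fixedSpace (blockHom (t, d)))
    (hord : ∃ n : ℕ, 0 < n ∧ d ^ n = 1 ∧ (n : k) ≠ 0) : d = 1 := by
  obtain ⟨n, hn, hpow, hnk⟩ := hord
  exact aux_unip_eq_one d (aux_block_sq_zero h).2 n hn hpow hnk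

/-- A "homology" block element has trivial first block if the first block is unipotent. -/
theorem aux_hom_t_eq_one {t : Matrix.GeneralLinearGroup α k}
    {d : Matrix.GeneralLinearGroup β k}
    (hhom : IsHomology (blockHom (t, d)))
    (hnil : IsNilpotent ((t : Matrix α α k) - 1)) : t = 1 := by
  set Nt : Matrix α α k := (t : Matrix α α k) - 1 with hNt
  set Nd : Matrix β β k := (d : Matrix β β k) - 1 with hNd
  by_contra hne
  have hNtne : Nt ≠ 0 := by
    intro h0
    apply hne
    ext1
    rw [Units.val_one, ← sub_eq_zero]
    exact h0
  have hx₁ : ∃ x₁, Nt *ᵥ x₁ ≠ 0 := by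
    by_contra hall
    push_neg at hall
    exact hNtne (aux_mat_eq_zero hall)
  obtain ⟨x₁, hx₁ne⟩ := hx₁
  set σ := blockHom (t, d) with hσ
  set u : α ⊕ β → k := Sum.elim (Nt *ᵥ x₁) 0 with hu
  have humem : u ∈ moveSpace σ := by
    refine ⟨Sum.elim x₁ 0, ?_⟩
    rw [Matrix.mulVecLin_apply, aux_block_sub_one, aux_block_mulVec, Matrix.mulVec_zero]
  have hune : u ≠ 0 := by
    intro h0
    exact hx₁ne (funext fun i => congrFun h0 (Sum.inl i))
  have hspan : (Submodule.span k {u}) = moveSpace σ := by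
    apply Submodule.eq_of_le_of_finrank_eq
    · exact (Submodule.span_singleton_le_iff_mem u _).mpr humem
    · rw [finrank_span_singleton hune, hhom.1]
  have key : ∀ w ∈ moveSpace σ, ∃ a : k, w = a • u := by
    intro w hw
    rw [← hspan] at hw
    obtain ⟨a, ha⟩ := Submodule.mem_span_singleton.mp hw
    exact ⟨a, ha.symm⟩
  obtain ⟨i₀, hi₀⟩ : ∃ i, (Nt *ᵥ x₁) i ≠ 0 := by
    by_contra hall
    push_neg at hall
    exact hx₁ne (funext hall)
  have hd0 : ∀ y, Nd *ᵥ y = 0 := by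
    intro y
    have hmem : Sum.elim (0 : α → k) (Nd *ᵥ y) ∈ moveSpace σ := by
      refine ⟨Sum.elim 0 y, ?_⟩
      rw [Matrix.mulVecLin_apply, aux_block_sub_one, aux_block_mulVec, Matrix.mulVec_zero]
    obtain ⟨a, ha⟩ := key _ hmem
    have ha0 : a = 0 := by
      have := congrFun ha (Sum.inl i₀)
      simp only [Sum.elim_inl, Pi.smul_apply, smul_eq_mul, hu] at this
      rcases mul_eq_zero.mp this.symm with h | h
      · exact h
      · exact absurd h hi₀
    rw [ha0, zero_smul] at ha
    exact funext fun j => congrFun ha (Sum.inr j)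
  have hNd0 : Nd = 0 := aux_mat_eq_zero hd0
  have hta : ∀ y, ∃ a : k, Nt *ᵥ y = a • (Nt *ᵥ x₁) := by
    intro y
    have hmem : Sum.elim (Nt *ᵥ y) (0 : β → k) ∈ moveSpace σ := by
      refine ⟨Sum.elim y 0, ?_⟩
      rw [Matrix.mulVecLin_apply, aux_block_sub_one, aux_block_mulVec, Matrix.mulVec_zero]
    obtain ⟨a, ha⟩ := key _ hmem
    refine ⟨a, funext fun i => ?_⟩
    have := congrFun ha (Sum.inl i)
    simpa [hu] using this
  obtain ⟨c, hc⟩ := hta (Nt *ᵥ x₁)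
  obtain ⟨K, hK⟩ := hnil
  have hpowv : ∀ j : ℕ, (Nt ^ j) *ᵥ (Nt *ᵥ x₁) = c ^ j • (Nt *ᵥ x₁) := by
    intro j
    induction j with
    | zero => simp [Matrix.one_mulVec]
    | succ j ih =>
        rw [pow_succ, ← Matrix.mulVec_mulVec, hc, Matrix.mulVec_smul, ih, pow_succ]
        rw [smul_smul, mul_comm c (c ^ j)]
  have hcK : c ^ K • (Nt *ᵥ x₁) = 0 := by
    rw [← hpowv, hK, Matrix.zero_mulVec]
  have hcK0 : c ^ K = 0 := by
    rcases smul_eq_zero.mp hcK with h | h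
    · exact h
    · exact absurd h hx₁ne
  have hK0 : K ≠ 0 := by
    rintro rfl
    rw [pow_zero] at hcK0
    exact one_ne_zero hcK0
  have hc0 : c = 0 := pow_eq_zero_iff hK0 |>.mp hcK0
  have hcz : Nt *ᵥ (Nt *ᵥ x₁) = 0 := by rw [hc, hc0, zero_smul]
  have hsq : ∀ y, (Nt * Nt) *ᵥ y = 0 := by
    intro y
    obtain ⟨a, ha⟩ := hta y
    rw [← Matrix.mulVec_mulVec, ha, Matrix.mulVec_smul, hcz, smul_zero]
  have hNt2 : Nt * Nt = 0 := aux_mat_eq_zero hsq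
  exact hhom.2 (aux_block_sq_zero_rev hNt2 (by rw [← hNd, hNd0, Matrix.zero_mul]))

end Helpers4

section Helpers5
open scoped Matrix
variable {k : Type*} [Field k] {α β : Type*} [Fintype α] [DecidableEq α]
  [Fintype β] [DecidableEq β]

theorem aux_galAct_X (M : Matrix.GeneralLinearGroup (α ⊕ β) k) (i : α ⊕ β) :
    galAct M (X i : MvPolynomial (α ⊕ β) k)
      = ∑ j, (((M⁻¹ : Matrix.GeneralLinearGroup (α ⊕ β) k) : Matrix (α ⊕ β) (α ⊕ β) k) i j)
          • X j := by
  simp [galAct]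

theorem aux_galAct_block_inl (d : Matrix.GeneralLinearGroup β k) (i : α) :
    galAct (blockHom ((1 : Matrix.GeneralLinearGroup α k), d))
        (X (Sum.inl i) : MvPolynomial (α ⊕ β) k) = X (Sum.inl i) := by
  rw [aux_galAct_X]
  have hinv : (blockHom ((1 : Matrix.GeneralLinearGroup α k), d))⁻¹
      = blockHom ((1 : Matrix.GeneralLinearGroup α k), d⁻¹) := by
    rw [← map_inv, Prod.inv_mk, inv_one]
  rw [hinv, aux_blockHom_val, Fintype.sum_sum_type]
  simp [Matrix.fromBlocks_apply₁₁, Matrix.fromBlocks_apply₁₂, Matrix.one_apply, ite_smul,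
    Finset.sum_ite_eq]

theorem aux_galAct_block_inr (t : Matrix.GeneralLinearGroup α k) (j : β) :
    galAct (blockHom (t, (1 : Matrix.GeneralLinearGroup β k)))
        (X (Sum.inr j) : MvPolynomial (α ⊕ β) k) = X (Sum.inr j) := by
  rw [aux_galAct_X]
  have hinv : (blockHom (t, (1 : Matrix.GeneralLinearGroup β k)))⁻¹
      = blockHom (t⁻¹, (1 : Matrix.GeneralLinearGroup β k)) := by
    rw [← map_inv, Prod.inv_mk, inv_one]
  rw [hinv, aux_blockHom_val, Fintype.sum_sum_type]
  simp [Matrix.fromBlocks_apply₂₁, Matrix.fromBlocks_apply₂₂, Matrix.one_apply, ite_smul,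
    Finset.sum_ite_eq]

theorem aux_galAct_supported {ι : Type*} [Fintype ι] [DecidableEq ι]
    (M : Matrix.GeneralLinearGroup ι k) (s : Set ι)
    (hfix : ∀ i ∈ s, galAct M (X i : MvPolynomial ι k) = X i)
    {p : MvPolynomial ι k} (hp : p ∈ MvPolynomial.supported k s) :
    galAct M p = p := by
  rw [MvPolynomial.supported_eq_adjoin_X] at hp
  refine Algebra.adjoin_induction (p := fun q _ => galAct M q = q) ?_ ?_ ?_ ?_ hp
  · rintro q ⟨i, ⟨hi, rfl⟩⟩
    exact hfix i hi
  · intro r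
    exact (galAct M).commutes r
  · intro p q _ _ hp hq
    rw [map_add, hp, hq]
  · intro p q _ _ hp hq
    rw [map_mul, hp, hq]

theorem aux_linForm_supported {ι : Type*} [Fintype ι] [DecidableEq ι]
    (y : Module.Dual k (ι → k)) (s : Set ι)
    (hy : ∀ i ∉ s, y (Pi.single i 1) = 0) :
    linForm y ∈ MvPolynomial.supported k s := by
  rw [linForm]
  apply Subalgebra.sum_mem
  intro i _
  by_cases hi : i ∈ s
  · exact mul_mem (by rw [← MvPolynomial.algebraMap_eq]; exact Subalgebra.algebraMap_mem _ _)
      (MvPolynomial.X_mem_supported.mpr hi)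
  · rw [hy i hi, map_zero, zero_mul]
    exact zero_mem _

theorem aux_ite_split {ι : Type*} [Fintype ι] [DecidableEq ι]
    (σ : Matrix.GeneralLinearGroup ι k) (L : MvPolynomial ι k)
    [Decidable (IsPseudoReflection σ)] [Decidable (IsTransvection σ)]
    [Decidable (IsHomology σ)] :
    (if IsPseudoReflection σ then L else 1)
      = (if IsTransvection σ then L else 1) * (if IsHomology σ then L else 1) := by
  split_ifs with h1 h2 h3 <;>
    simp_all [IsTransvection, IsHomology] <;> tauto

end Helpers5

section Helpers6
open scoped Matrix
variable {k : Type*} [Field k] {α β : Type*} [Fintype α] [DecidableEq α]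
  [Fintype β] [DecidableEq β]

theorem aux_single_inl (i : α) :
    (Pi.single (Sum.inl i) (1:k) : α ⊕ β → k) = Sum.elim (Pi.single i 1) (0 : β → k) := by
  funext a
  rcases a with a | a <;> simp [Pi.single_apply]

theorem aux_single_inr (j : β) :
    (Pi.single (Sum.inr j) (1:k) : α ⊕ β → k) = Sum.elim (0 : α → k) (Pi.single j 1) := by
  funext a
  rcases a with a | a <;> simp [Pi.single_apply]

end Helpers6

/-- Let `G = T × D` be a finite abelian pseudo-reflection group with `T`
the transvection subgroup and `D` the homology subgroup, block-diagonally in coordinates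
adapted to `V = V^D ⊕ V_D`. For each pseudo-reflection `σ ∈ G` choose a linear form `x σ`
defining its fixed hyperplane, and let `θ_T`, `θ_D`, `θ_G` be the products of these forms
over the transvections, the homologies and all the pseudo-reflections of `G` respectively
(the differents of `T`, `D` and `G`). Then `θ_T ∈ k[V^D]` (it only involves the coordinates
`y` of `V^D`), `θ_D ∈ k[V_D]`, and `θ_G = θ_T · θ_D`; in particular `θ_T` is `D`-invariant
and `θ_D` is `T`-invariant. -/
theorem statement14 {k : Type*} [Field k] {m r : ℕ}
    (T : Subgroup (Matrix.GeneralLinearGroup (Fin m) k)) [Finite ↥T]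
    (D : Subgroup (Matrix.GeneralLinearGroup (Fin r) k)) [Finite ↥D]
    (hTab : ∀ a ∈ T, ∀ b ∈ T, a * b = b * a)
    (hDab : ∀ a ∈ D, ∀ b ∈ D, a * b = b * a)
    (hTgen : Subgroup.closure {τ | τ ∈ T ∧ IsTransvection τ} = T)
    (hDgen : Subgroup.closure {σ | σ ∈ D ∧ IsHomology σ} = D)
    (G : Subgroup (Matrix.GeneralLinearGroup (Fin m ⊕ Fin r) k)) [Fintype ↥G]
    (hG : G = (T.prod D).map blockHom)
    (x : ↥G → Module.Dual k (Fin m ⊕ Fin r → k))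
    (hx : ∀ σ : ↥G, IsPseudoReflection (σ : Matrix.GeneralLinearGroup (Fin m ⊕ Fin r) k) →
      LinearMap.ker (x σ) = fixedSpace (σ : Matrix.GeneralLinearGroup (Fin m ⊕ Fin r) k)) :
    theta G x IsTransvection ∈
      MvPolynomial.supported k (Set.range (Sum.inl : Fin m → Fin m ⊕ Fin r)) ∧
    theta G x IsHomology ∈
      MvPolynomial.supported k (Set.range (Sum.inr : Fin r → Fin m ⊕ Fin r)) ∧
    theta G x IsPseudoReflection = theta G x IsTransvection * theta G x IsHomology ∧
    (∀ d ∈ D, galAct (blockHom (1, d)) (theta G x IsTransvection) =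
      theta G x IsTransvection) ∧
    (∀ t ∈ T, galAct (blockHom (t, 1)) (theta G x IsHomology) =
      theta G x IsHomology) := by
  classical
  have hdecomp : ∀ g ∈ G, ∃ t d, t ∈ T ∧ d ∈ D ∧ g = blockHom (t, d) := by
    intro g hg
    rw [hG] at hg
    obtain ⟨p, hp, hble⟩ := Subgroup.mem_map.mp hg
    obtain ⟨hpT, hpD⟩ := Subgroup.mem_prod.mp hp
    exact ⟨p.1, p.2, hpT, hpD, hble.symm⟩
  have hTun := aux_T_unip T hTab hTgen
  have hDord := aux_D_order D hDab hDgen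
  -- the transvections of `G` vanish on the coordinates of `V_D`
  have htransv : ∀ σ : ↥G,
      IsTransvection (σ : Matrix.GeneralLinearGroup (Fin m ⊕ Fin r) k) →
      ∀ j : Fin r, (x σ) (Pi.single (Sum.inr j) 1) = 0 := by
    intro σ hσ j
    obtain ⟨t, d, htT, hdD, heq⟩ := hdecomp (↑σ) σ.2
    have hd1 : d = 1 := aux_trans_d_eq_one (by rw [← heq]; exact hσ.2) (hDord d hdD)
    have hfixmem : Pi.single (Sum.inr j) (1:k)
        ∈ fixedSpace (σ : Matrix.GeneralLinearGroup (Fin m ⊕ Fin r) k) := by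
      show Matrix.mulVecLin _ _ = 0
      rw [Matrix.mulVecLin_apply, heq, aux_block_sub_one, aux_single_inr, aux_block_mulVec,
        Matrix.mulVec_zero, hd1]
      funext a
      rcases a with a | a <;> simp
    rw [← hx σ hσ.1] at hfixmem
    exact hfixmem
  -- the homologies of `G` vanish on the coordinates of `V^D`
  have hhomol : ∀ σ : ↥G,
      IsHomology (σ : Matrix.GeneralLinearGroup (Fin m ⊕ Fin r) k) →
      ∀ i : Fin m, (x σ) (Pi.single (Sum.inl i) 1) = 0 := by
    intro σ hσ i
    obtain ⟨t, d, htT, hdD, heq⟩ := hdecomp (↑σ) σ.2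
    have ht1 : t = 1 := aux_hom_t_eq_one (by rw [← heq]; exact hσ) (hTun t htT)
    have hfixmem : Pi.single (Sum.inl i) (1:k)
        ∈ fixedSpace (σ : Matrix.GeneralLinearGroup (Fin m ⊕ Fin r) k) := by
      show Matrix.mulVecLin _ _ = 0
      rw [Matrix.mulVecLin_apply, heq, aux_block_sub_one, aux_single_inl, aux_block_mulVec,
        Matrix.mulVec_zero, ht1]
      funext a
      rcases a with a | a <;> simp
    rw [← hx σ hσ.1] at hfixmem
    exact hfixmem
  have hθT : theta G x IsTransvection ∈
      MvPolynomial.supported k (Set.range (Sum.inl : Fin m → Fin m ⊕ Fin r)) := by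
    unfold theta
    apply Subalgebra.prod_mem
    intro σ _
    by_cases hσ : IsTransvection (σ : Matrix.GeneralLinearGroup (Fin m ⊕ Fin r) k)
    · rw [if_pos hσ]
      refine aux_linForm_supported _ _ ?_
      rintro (i | j) hi
      · exact absurd (Set.mem_range_self i) hi
      · exact htransv σ hσ j
    · rw [if_neg hσ]
      exact one_mem _
  have hθD : theta G x IsHomology ∈
      MvPolynomial.supported k (Set.range (Sum.inr : Fin r → Fin m ⊕ Fin r)) := by
    unfold theta
    apply Subalgebra.prod_mem
    intro σ _
    by_cases hσ : IsHomology (σ : Matrix.GeneralLinearGroup (Fin m ⊕ Fin r) k)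
    · rw [if_pos hσ]
      refine aux_linForm_supported _ _ ?_
      rintro (i | j) hj
      · exact hhomol σ hσ i
      · exact absurd (Set.mem_range_self j) hj
    · rw [if_neg hσ]
      exact one_mem _
  refine ⟨hθT, hθD, ?_, ?_, ?_⟩
  · unfold theta
    rw [← Finset.prod_mul_distrib]
    exact Finset.prod_congr rfl fun σ _ => aux_ite_split _ _
  · intro d hd
    refine aux_galAct_supported _ _ ?_ hθT
    rintro i ⟨a, rfl⟩
    exact aux_galAct_block_inl d a
  · intro t ht
    refine aux_galAct_supported _ _ ?_ hθD
    rintro j ⟨b, rfl⟩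
    exact aux_galAct_block_inr t b
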